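/- Let P be a real symmetric matrix with rows and columns indexed by a finite set H of size m, satisfying P·P = P, and let r be its rank. Then for every 0 ≤ k ≤ r, Σ_{A ⊆ H, |A| = r, det P[A] > 0} Σ_{B ⊆ A, |B| = r−k} det(P[B]) ≤ C(m−r+k, k)·C(r, k). -/

import Mathlib

open Matrix

/-- The principal submatrix `M[A]` of `M` determined by the rows and columns
    with index in `A` (with the convention `det M[∅] = 1`). -/
def psub {ι : Type*} (M : Matrix ι ι ℝ) (A : Finset ι) : Matrix ↥A ↥A ℝ :=
  M.submatrix (fun a => a.1) (fun a => a.1)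

section Aux

open Finset Polynomial

variable {H : Type*} [Fintype H] [DecidableEq H] {R : Type*} [CommRing R]

lemma my_det_piecewise_one (M : Matrix H H R) (s : Finset H) :
    det (s.piecewise M (1 : Matrix H H R)) =
      det (M.submatrix (fun a : ↥s => a.1) (fun a : ↥s => a.1)) := by
  rw [twoBlockTriangular_det (s.piecewise M (1 : Matrix H H R)) (fun i => i ∈ s)]
  · have h2 : (toSquareBlockProp (s.piecewise M (1 : Matrix H H R)) fun i => ¬ i ∈ s) = 1 := by
      ext i j
      simp only [toSquareBlockProp, toBlock, Matrix.submatrix_apply, Matrix.of_apply,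
        Finset.piecewise_eq_of_notMem _ _ _ i.2]
      change s.piecewise M (1 : Matrix H H R) (i : H) j = (1 : Matrix _ _ R) i j
      erw [congrFun (Finset.piecewise_eq_of_notMem s M (1 : Matrix H H R) i.2) j]
      by_cases h : (i : H) = j
      · simp [h, Subtype.ext h, Matrix.one_apply]
      · rw [Matrix.one_apply_ne h, Matrix.one_apply_ne (fun hij => h (congrArg Subtype.val hij))]
    have h1 : (toSquareBlockProp (s.piecewise M (1 : Matrix H H R)) fun i => i ∈ s) =
        M.submatrix (fun a : ↥s => a.1) (fun a : ↥s => a.1) := by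
      ext i j
      simp only [toSquareBlockProp, toBlock, Matrix.submatrix_apply, Matrix.of_apply,
        Finset.piecewise_eq_of_mem _ _ _ i.2]
      exact congrFun (Finset.piecewise_eq_of_mem s M (1 : Matrix H H R) i.2) j
    rw [h1, h2, det_one, mul_one]; congr!
  · intro i hi j hj
    erw [Finset.piecewise_eq_of_notMem _ _ _ hi]
    exact Matrix.one_apply_ne (fun h => hi (h ▸ hj))

lemma my_det_one_add_expand (M : Matrix H H R) :
    det (1 + M) = ∑ s : Finset H,
      det (M.submatrix (fun a : ↥s => a.1) (fun a : ↥s => a.1)) := by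
  have h : (1 + M : Matrix H H R) = M + 1 := by rw [add_comm]
  rw [h]
  have := (detRowAlternating : AlternatingMap R (H → R) R H).toMultilinearMap.map_add_univ
    (M : H → H → R) (1 : Matrix H H R)
  rw [show det (M + 1) = _ from this]
  exact Finset.sum_congr rfl fun s _ => my_det_piecewise_one M s

lemma my_gen_fun (P : Matrix H H ℝ) (hP : P.IsHermitian) (hPP : P * P = P) :
    ∑ s : Finset H, (X : ℝ[X]) ^ s.card * C (det (psub P s))
      = (1 + X : ℝ[X]) ^ P.rank := by
  classical
  set V : Matrix H H ℝ := (hP.eigenvectorUnitary : Matrix H H ℝ) with hV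
  have hVsV : V * star V = 1 := (Matrix.mem_unitaryGroup_iff).mp hP.eigenvectorUnitary.2
  have hsVV : star V * V = 1 := (Matrix.mem_unitaryGroup_iff').mp hP.eigenvectorUnitary.2
  have hofReal : (RCLike.ofReal ∘ hP.eigenvalues : H → ℝ) = hP.eigenvalues := by
    funext i; simp [RCLike.ofReal_real_eq_id]
  have hdiag : star V * P * V = diagonal hP.eigenvalues := by
    rw [← hofReal]
    exact (Unitary.conjStarAlgAut_star_apply (S := ℝ) _ _).symm.trans hP.conjStarAlgAut_star_eigenvectorUnitary
  have hspec : P = V * diagonal hP.eigenvalues * star V := by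
    rw [← hofReal]; exact hP.spectral_theorem.trans (Unitary.conjStarAlgAut_apply (S := ℝ) _ _)
  -- eigenvalues are 0 or 1
  have h01 : ∀ i, hP.eigenvalues i = 0 ∨ hP.eigenvalues i = 1 := by
    intro i
    have hsq : diagonal hP.eigenvalues * diagonal hP.eigenvalues = diagonal hP.eigenvalues := by
      calc diagonal hP.eigenvalues * diagonal hP.eigenvalues
          = (star V * P * V) * (star V * P * V) := by rw [hdiag]
        _ = star V * (P * (V * star V) * P) * V := by noncomm_ring
        _ = star V * P * V := by rw [hVsV, mul_one, hPP]
        _ = diagonal hP.eigenvalues := hdiag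
    have := congr_fun (congr_fun hsq i) i
    simp only [Matrix.mul_apply, Matrix.diagonal_apply] at this
    have h : hP.eigenvalues i * hP.eigenvalues i = hP.eigenvalues i := by
      simpa using this
    have h2 : hP.eigenvalues i * (hP.eigenvalues i - 1) = 0 := by ring_nf; linarith
    rcases mul_eq_zero.mp h2 with h | h
    · exact Or.inl h
    · exact Or.inr (by linarith)
  -- generating function computation
  have key : (∑ s : Finset H, (X : ℝ[X]) ^ s.card * C (det (psub P s)))
      = det (1 + (X : ℝ[X]) • P.map C) := by
    rw [my_det_one_add_expand]
    refine (Finset.sum_congr rfl fun s _ => ?_).symm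
    have hsub : ((X : ℝ[X]) • P.map C).submatrix (fun a : ↥s => a.1) (fun a : ↥s => a.1)
        = (X : ℝ[X]) • ((psub P s).map C) := by
      ext i j
      simp [psub, Matrix.smul_apply, Matrix.map_apply, Matrix.submatrix_apply]
    have hdet : (C : ℝ →+* ℝ[X]) (psub P s).det = ((psub P s).map C).det := by
      rw [RingHom.map_det, RingHom.mapMatrix_apply]
    rw [hsub, Matrix.det_smul, Fintype.card_coe, hdet]
  rw [key]
  have hmapmul : ∀ (A B : Matrix H H ℝ), ((A * B).map (C : ℝ →+* ℝ[X]))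
      = A.map C * B.map C := fun A B => Matrix.map_mul
  have hfactor : (1 + (X : ℝ[X]) • P.map C)
      = V.map C * (1 + (X : ℝ[X]) • (diagonal hP.eigenvalues).map C) * (star V).map C := by
    rw [Matrix.mul_add, Matrix.add_mul, Matrix.mul_one, ← hmapmul, hVsV]
    rw [Matrix.mul_smul, Matrix.smul_mul, ← hmapmul, ← hmapmul, ← hspec,
      Matrix.map_one _ (map_zero C) (map_one C)]
  have hmid : det (1 + (X : ℝ[X]) • (diagonal hP.eigenvalues).map C) = (1 + X : ℝ[X]) ^ P.rank := by
    have hdiagform : (1 + (X : ℝ[X]) • (diagonal hP.eigenvalues).map C)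
        = diagonal (fun i => 1 + C (hP.eigenvalues i) * X) := by
      rw [Matrix.diagonal_map (by simp)]
      ext i j
      by_cases h : i = j
      · subst h
        simp only [Matrix.add_apply, Matrix.smul_apply, Matrix.diagonal_apply_eq,
          Matrix.one_apply_eq, smul_eq_mul]
        ring
      · simp only [Matrix.add_apply, Matrix.smul_apply, Matrix.diagonal_apply_ne _ h,
          Matrix.one_apply_ne h, smul_eq_mul, mul_zero, add_zero]
    rw [hdiagform, det_diagonal]
    rw [← Finset.prod_filter_mul_prod_filter_not Finset.univ (fun i => hP.eigenvalues i ≠ 0)]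
    have h1 : ∀ i ∈ Finset.univ.filter (fun i => hP.eigenvalues i ≠ 0),
        1 + C (hP.eigenvalues i) * X = 1 + X := by
      intro i hi
      rcases h01 i with h | h
      · exact absurd h (by simpa using hi)
      · simp [h]
    have h0 : ∀ i ∈ Finset.univ.filter (fun i => ¬ hP.eigenvalues i ≠ 0),
        1 + C (hP.eigenvalues i) * X = 1 := by
      intro i hi
      have : hP.eigenvalues i = 0 := by simpa using hi
      simp [this]
    rw [Finset.prod_congr rfl h1, Finset.prod_congr rfl h0, Finset.prod_const,
      Finset.prod_const_one, mul_one, hP.rank_eq_card_non_zero_eigs, Fintype.card_subtype]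
  have hdetV : det (V.map (C : ℝ →+* ℝ[X])) * det ((star V).map C) = 1 := by
    have h1 : (C : ℝ →+* ℝ[X]) V.det = (V.map C).det := by
      rw [RingHom.map_det, RingHom.mapMatrix_apply]
    have h2 : (C : ℝ →+* ℝ[X]) (star V).det = ((star V).map C).det := by
      rw [RingHom.map_det, RingHom.mapMatrix_apply]
    rw [← h1, ← h2, ← _root_.map_mul, ← det_mul, hVsV, det_one, _root_.map_one]
  rw [hfactor, det_mul, det_mul, hmid]
  linear_combination (1 + X : ℝ[X]) ^ P.rank * hdetV

lemma my_sum_minors (P : Matrix H H ℝ) (hP : P.IsHermitian) (hPP : P * P = P) (t : ℕ) :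
    ∑ B ∈ Finset.univ.powersetCard t, det (psub P B) = (P.rank.choose t : ℝ) := by
  have h := congrArg (fun p : ℝ[X] => p.coeff t) (my_gen_fun P hP hPP)
  rw [Polynomial.finset_sum_coeff, Polynomial.coeff_one_add_X_pow] at h
  have hterm : ∀ s : Finset H, ((X : ℝ[X]) ^ s.card * C (det (psub P s))).coeff t
      = if s.card = t then det (psub P s) else 0 := by
    intro s
    rw [mul_comm, Polynomial.coeff_C_mul, Polynomial.coeff_X_pow]
    rcases eq_or_ne s.card t with hc | hc
    · simp [hc]
    · simp [hc, Ne.symm hc]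
  rw [Finset.sum_congr rfl (fun s _ => hterm s)] at h
  rw [Finset.powersetCard_eq_filter, Finset.powerset_univ, Finset.sum_filter]
  exact h

lemma my_card_supersets (B : Finset H) (r : ℕ) (ht : B.card ≤ r) :
    ((Finset.univ.powersetCard r).filter (fun A => B ⊆ A)).card
      = (Fintype.card H - B.card).choose (r - B.card) := by
  rw [← Finset.card_compl B, ← Finset.card_powersetCard (r - B.card) Bᶜ]
  apply Finset.card_bij' (fun A _ => A \ B) (fun C _ => B ∪ C)
  · intro A hA
    simp only [Finset.mem_filter, Finset.mem_powersetCard_univ] at hA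
    rw [Finset.mem_powersetCard]
    constructor
    · intro x hx
      simp only [Finset.mem_sdiff] at hx
      simp [Finset.mem_compl, hx.2]
    · rw [Finset.card_sdiff_of_subset hA.2, hA.1]
  · intro C hC
    rw [Finset.mem_powersetCard] at hC
    have hdisj : Disjoint B C := by
      rw [Finset.disjoint_right]
      intro x hx
      have hx2 := hC.1 hx
      simp only [Finset.mem_compl] at hx2
      exact hx2
    simp only [Finset.mem_filter, Finset.mem_powersetCard_univ]
    refine ⟨?_, Finset.subset_union_left⟩
    rw [Finset.card_union_of_disjoint hdisj, hC.2]
    omega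
  · intro A hA
    simp only [Finset.mem_filter, Finset.mem_powersetCard_univ] at hA
    exact Finset.union_sdiff_of_subset hA.2
  · intro C hC
    rw [Finset.mem_powersetCard] at hC
    have hdisj : Disjoint B C := by
      rw [Finset.disjoint_right]
      intro x hx
      have hx2 := hC.1 hx
      simp only [Finset.mem_compl] at hx2
      exact hx2
    exact Finset.union_sdiff_cancel_left hdisj

lemma my_psub_det_nonneg (P : Matrix H H ℝ) (hP : P.IsHermitian) (hPP : P * P = P)
    (B : Finset H) : 0 ≤ det (psub P B) := by
  have hPSD : P.PosSemidef := by
    have h : P = Pᴴ * P := by rw [hP.eq, hPP]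
    rw [h]
    exact Matrix.posSemidef_conjTranspose_mul_self P
  have hsub : (psub P B).PosSemidef := hPSD.submatrix _
  rw [hsub.isHermitian.det_eq_prod_eigenvalues]
  apply Finset.prod_nonneg
  intro i _
  simpa [RCLike.ofReal_real_eq_id] using hsub.eigenvalues_nonneg i

end Aux

/-- Let `P` be a real symmetric projection matrix with rows and columns
indexed by a finite set `H` of size `m` and of rank `r`. Then for every `0 ≤ k ≤ r`,
`∑_{A ⊆ H, |A| = r, det P[A] > 0} ∑_{B ⊆ A, |B| = r-k} det(P[B]) ≤ C(m-r+k, k)·C(r, k)`. -/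
theorem double_sum_principal_minors_le
    {H : Type*} [Fintype H] [DecidableEq H]
    (P : Matrix H H ℝ) (hP : P.IsHermitian) (hPP : P * P = P)
    (k : ℕ) (hk : k ≤ P.rank) :
    ∑ A ∈ ((Finset.univ : Finset H).powersetCard P.rank).filter
        (fun A => 0 < (psub P A).det),
        ∑ B ∈ A.powersetCard (P.rank - k), (psub P B).det
      ≤ ((Fintype.card H - P.rank + k).choose k * P.rank.choose k : ℝ) := by
  classical
  set r := P.rank with hr
  set t := r - k with htdef
  set m := Fintype.card H with hm
  have hrm : r ≤ m := Matrix.rank_le_card_width P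
  have step1 : ∑ A ∈ ((Finset.univ : Finset H).powersetCard r).filter
        (fun A => 0 < (psub P A).det), ∑ B ∈ A.powersetCard t, (psub P B).det
      ≤ ∑ A ∈ (Finset.univ : Finset H).powersetCard r,
          ∑ B ∈ A.powersetCard t, (psub P B).det := by
    apply Finset.sum_le_sum_of_subset_of_nonneg (Finset.filter_subset _ _)
    intro A _ _
    exact Finset.sum_nonneg fun B _ => my_psub_det_nonneg P hP hPP B
  have step2 : ∑ A ∈ (Finset.univ : Finset H).powersetCard r,
        ∑ B ∈ A.powersetCard t, (psub P B).det
      = ∑ B ∈ (Finset.univ : Finset H).powersetCard t,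
          ∑ A ∈ ((Finset.univ : Finset H).powersetCard r).filter (fun A => B ⊆ A),
            (psub P B).det := by
    apply Finset.sum_comm'
    intro A B
    simp only [Finset.mem_powersetCard, Finset.mem_filter, Finset.mem_powersetCard_univ]
    constructor
    · rintro ⟨hA, hBA, hB⟩
      exact ⟨⟨hA, hBA⟩, Finset.subset_univ B, hB⟩
    · rintro ⟨⟨hA, hBA⟩, _, hB⟩
      exact ⟨hA, hBA, hB⟩
  have step3 : ∑ B ∈ (Finset.univ : Finset H).powersetCard t,
        ∑ A ∈ ((Finset.univ : Finset H).powersetCard r).filter (fun A => B ⊆ A),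
          (psub P B).det
      = ((m - t).choose (r - t) : ℝ) * ∑ B ∈ (Finset.univ : Finset H).powersetCard t,
          (psub P B).det := by
    rw [Finset.mul_sum]
    refine Finset.sum_congr rfl fun B hB => ?_
    have hBc : B.card = t := Finset.mem_powersetCard_univ.mp hB
    rw [Finset.sum_const, my_card_supersets B r (by rw [hBc, htdef]; exact Nat.sub_le r k),
      hBc, nsmul_eq_mul]
  have step4 : ∑ B ∈ (Finset.univ : Finset H).powersetCard t, (psub P B).det
      = (r.choose t : ℝ) := my_sum_minors P hP hPP t
  have harith1 : m - t = m - r + k := by omega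
  have harith2 : r - t = k := by omega
  have harith3 : r.choose t = r.choose k := by rw [htdef, Nat.choose_symm hk]
  calc ∑ A ∈ ((Finset.univ : Finset H).powersetCard r).filter
        (fun A => 0 < (psub P A).det), ∑ B ∈ A.powersetCard t, (psub P B).det
      ≤ ∑ A ∈ (Finset.univ : Finset H).powersetCard r,
          ∑ B ∈ A.powersetCard t, (psub P B).det := step1
    _ = ((m - t).choose (r - t) : ℝ) * ∑ B ∈ (Finset.univ : Finset H).powersetCard t,
          (psub P B).det := by rw [step2, step3]
    _ = ((m - r + k).choose k : ℝ) * (r.choose k : ℝ) := by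
          rw [step4, harith1, harith2, harith3]
    _ = ((m - r + k).choose k * r.choose k : ℝ) := by ring
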